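/- Let A be a finite alphabet, let R be a homogeneous rewriting system on A (|ℓ| = |r| for every (ℓ,r) ∈ R), and let n be at least the maximum of |ℓ| over all rules (ℓ,r) ∈ R. Define R' = { (u ℓ v, u r v) : (ℓ,r) ∈ R, u,v ∈ A*, |u ℓ v| = n } (so every rule of R' has both sides of length exactly n). Then for all words u, v over A with |u| ≥ n: u ↔*_R v if and only if u ↔*_{R'} v. In particular, the map sending the ↔*_{R'}-class of a word u of length ≥ n to its ↔*_R-class is a well-defined bijection (indeed a semigroup isomorphism) between the ideal of elements of length ≥ n of the monoid presented by ⟨A | R'⟩ and the ideal of elements of length ≥ n of the monoid presented by ⟨A | R⟩. -/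

import Mathlib

/-- Single-step reduction of a string rewriting system `R`:
`u →_R v` iff `u = xℓy` and `v = xry` for some rule `(ℓ, r) ∈ R`. -/
def Step {α : Type*} (R : Set (List α × List α)) (u v : List α) : Prop :=
  ∃ x y l r, (l, r) ∈ R ∧ u = x ++ l ++ y ∧ v = x ++ r ++ y

section aux
variable {α : Type*} {R : Set (List α × List α)} {n : ℕ}

lemma step_len (hhom : ∀ p ∈ R, p.1.length = p.2.length) {u v : List α}
    (h : Step R u v) : u.length = v.length := by
  obtain ⟨x, y, l, r, hlr, rfl, rfl⟩ := h
  have := hhom _ hlr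
  simp_all

lemma eqv_len (hhom : ∀ p ∈ R, p.1.length = p.2.length) {u v : List α}
    (h : Relation.EqvGen (Step R) u v) : u.length = v.length := by
  induction h with
  | rel _ _ h => exact step_len hhom h
  | refl => rfl
  | symm _ _ _ ih => omega
  | trans _ _ _ _ _ ih1 ih2 => omega

lemma step'_to_step {u v : List α}
    (h : Step {q : List α × List α | ∃ l r u' v' : List α,
            (l, r) ∈ R ∧ q = (u' ++ l ++ v', u' ++ r ++ v') ∧
              (u' ++ l ++ v').length = n} u v) : Step R u v := by
  obtain ⟨x, y, l', r', ⟨l, r, u', v', hlr, heq, -⟩, rfl, rfl⟩ := h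
  obtain ⟨rfl, rfl⟩ := Prod.mk.injEq .. ▸ heq
  exact ⟨x ++ u', v' ++ y, l, r, hlr, by simp, by simp⟩

lemma step_to_step' (hmax : ∀ p ∈ R, p.1.length ≤ n) {u v : List α}
    (h : Step R u v) (hu : n ≤ u.length) :
    Step {q : List α × List α | ∃ l r u' v' : List α,
            (l, r) ∈ R ∧ q = (u' ++ l ++ v', u' ++ r ++ v') ∧
              (u' ++ l ++ v').length = n} u v := by
  obtain ⟨x, y, l, r, hlr, rfl, rfl⟩ := h
  have hl : l.length ≤ n := hmax _ hlr
  have hky : n - l.length ≤ x.length + y.length := by simp at hu; omega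
  set i := min (n - l.length) y.length with hi
  set j := n - l.length - i with hjdef
  have hj : j ≤ x.length := by omega
  refine ⟨x.take (x.length - j), y.drop i,
    x.drop (x.length - j) ++ l ++ y.take i, x.drop (x.length - j) ++ r ++ y.take i,
    ⟨l, r, x.drop (x.length - j), y.take i, hlr, rfl, ?_⟩, ?_, ?_⟩
  · simp
    omega
  · simp only [← List.append_assoc, List.take_append_drop]
    rw [List.append_assoc (x ++ l), List.take_append_drop]
  · simp only [← List.append_assoc, List.take_append_drop]
    rw [List.append_assoc (x ++ r), List.take_append_drop]

end aux

/-- For a homogeneous system `R` and `n` at least the maximal rule length,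
let `R' = {(uℓv, urv) : (ℓ,r) ∈ R, |uℓv| = n}`.  Then for words of length
at least `n` the Thue congruences of `R` and `R'` coincide; hence the map
sending the `↔*_{R'}`-class of a word of length `≥ n` to its `↔*_R`-class is
a well-defined bijection between the corresponding ideals. -/
theorem stmt_14 {α : Type*} [Fintype α] (R : Set (List α × List α)) (n : ℕ)
    (hhom : ∀ p ∈ R, p.1.length = p.2.length)
    (hmax : ∀ p ∈ R, p.1.length ≤ n) :
    ∀ u v : List α, n ≤ u.length →
      (Relation.EqvGen
          (Step {q : List α × List α | ∃ l r u' v' : List α,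
            (l, r) ∈ R ∧ q = (u' ++ l ++ v', u' ++ r ++ v') ∧
              (u' ++ l ++ v').length = n}) u v
        ↔ Relation.EqvGen (Step R) u v) := by
  intro u v hu
  constructor
  · intro h
    exact Relation.EqvGen.mono (fun a b hab => step'_to_step hab) _ _ h
  · intro h
    induction h with
    | rel a b hab => exact Relation.EqvGen.rel _ _ (step_to_step' hmax hab hu)
    | refl a => exact Relation.EqvGen.refl _
    | symm a b hab ih =>
      have := eqv_len hhom hab
      exact (ih (by omega)).symm _ _
    | trans a b c hab hbc ih1 ih2 =>
      have := eqv_len hhom hab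
      exact (ih1 hu).trans _ _ _ (ih2 (by omega))
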